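/- Let R be the Novikov ring with residue field k. If (C, d) is a bounded chain complex of finite-rank free R-modules such that the complex C ⊗_R k is acyclic, then C itself is acyclic. -/

import Mathlib

open CategoryTheory Limits

/-- The Novikov ring over a field k, modelled as Hahn series with exponents in ℝ≥0. -/
abbrev Nov (k : Type) [Field k] : Type := HahnSeries NNReal k

/-- The maximal ideal t^{>0}R of the Novikov ring, generated by the monomials
t^λ, λ > 0. -/
noncomputable def NovMax (k : Type) [Field k] : Ideal (Nov k) :=
  Ideal.span { x : Nov k | ∃ l : NNReal, 0 < l ∧ x = HahnSeries.single l 1 }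

/-- The residue field k = R / t^{>0}R of the Novikov ring. -/
abbrev NovRes (k : Type) [Field k] : Type := Nov k ⧸ NovMax k

noncomputable instance extendScalarsAdditive (R S : Type) [CommRing R] [CommRing S]
    (f : R →+* S) : (ModuleCat.extendScalars f).Additive := by
  exact (ModuleCat.extendRestrictScalarsAdj f).left_adjoint_additive


set_option maxHeartbeats 1000000
set_option synthInstance.maxHeartbeats 400000

section NovikovRing

variable {k : Type} [Field k]


lemma coeff_zero_mul (x y : Nov k) : (x * y).coeff 0 = x.coeff 0 * y.coeff 0 := by
  by_cases hx : x = 0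
  · simp [hx]
  by_cases hy : y = 0
  · simp [hy]
  by_cases hox : x.order = 0
  · by_cases hoy : y.order = 0
    · have := HahnSeries.coeff_mul_order_add_order x y
      rw [hox, hoy, add_zero] at this
      have e1 : x.leadingCoeff = x.coeff 0 := by rw [HahnSeries.leadingCoeff_eq, hox]
      have e2 : y.leadingCoeff = y.coeff 0 := by rw [HahnSeries.leadingCoeff_eq, hoy]
      rw [this, e1, e2]
    · have h1 : y.coeff 0 = 0 := by
        apply HahnSeries.coeff_eq_zero_of_lt_order
        exact pos_iff_ne_zero.mpr hoy
      have h2 : (x * y).coeff 0 = 0 := by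
        apply HahnSeries.coeff_eq_zero_of_lt_order
        rw [HahnSeries.order_mul hx hy]
        exact lt_of_lt_of_le (pos_iff_ne_zero.mpr hoy) (le_add_self)
      rw [h1, h2, mul_zero]
  · have h1 : x.coeff 0 = 0 := by
      apply HahnSeries.coeff_eq_zero_of_lt_order
      exact pos_iff_ne_zero.mpr hox
    have h2 : (x * y).coeff 0 = 0 := by
      apply HahnSeries.coeff_eq_zero_of_lt_order
      rw [HahnSeries.order_mul hx hy]
      exact lt_of_lt_of_le (pos_iff_ne_zero.mpr hox) (le_self_add)
    rw [h1, h2, zero_mul]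

/-- coefficient at 0 as ring hom -/
noncomputable def eps (k : Type) [Field k] : Nov k →+* k where
  toFun x := x.coeff 0
  map_one' := by simp
  map_mul' := coeff_zero_mul
  map_zero' := rfl
  map_add' x y := by simp

/-- shift down by l₀ -/
noncomputable def shiftDown (x : Nov k) (l₀ : NNReal) : Nov k where
  coeff a := x.coeff (a + l₀)
  isPWO_support' := by
    apply Set.IsPWO.mono (Set.IsPWO.image_of_monotone x.isPWO_support
      (f := fun a => a - l₀) (fun a b hab => tsub_le_tsub_right hab l₀))
    intro a ha
    have : x.coeff (a + l₀) ≠ 0 := ha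
    exact ⟨a + l₀, this, by simp⟩

lemma single_mul_shiftDown (x : Nov k) (hx : x ≠ 0) (h0 : x.coeff 0 = 0) :
    (HahnSeries.single x.order 1 : Nov k) * shiftDown x x.order = x := by
  by_cases hsd : shiftDown x x.order = 0
  · exfalso
    have : (shiftDown x x.order).coeff 0 = x.coeff x.order := by
      simp [shiftDown]
    rw [hsd] at this
    exact (HahnSeries.coeff_order_eq_zero.not.mpr hx) (by simpa using this.symm)
  ext a
  by_cases ha : x.order ≤ a
  · have : a = (a - x.order) + x.order := (tsub_add_cancel_of_le ha).symm
    rw [this, HahnSeries.coeff_single_mul_add, one_mul]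
    simp only [shiftDown]
  · push_neg at ha
    rw [HahnSeries.coeff_eq_zero_of_lt_order ha]
    apply HahnSeries.coeff_eq_zero_of_lt_order
    rw [HahnSeries.order_mul (by simp) hsd, HahnSeries.order_single (one_ne_zero)]
    exact lt_of_lt_of_le ha le_self_add

lemma novMax_eq_ker : NovMax k = RingHom.ker (eps k) := by
  apply le_antisymm
  · rw [NovMax, Ideal.span_le]
    rintro x ⟨l, hl, rfl⟩
    simp only [SetLike.mem_coe, RingHom.mem_ker]
    show (HahnSeries.single l 1 : Nov k).coeff 0 = 0
    exact HahnSeries.coeff_single_of_ne (ne_of_lt hl)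
  · intro x hx
    have h0 : x.coeff 0 = 0 := hx
    by_cases hxz : x = 0
    · simp [hxz]
    · have hord : 0 < x.order := by
        rcases eq_or_ne x.order 0 with h | h
        · exact absurd (h ▸ h0) (HahnSeries.coeff_order_eq_zero.not.mpr hxz)
        · exact pos_iff_ne_zero.mpr h
      rw [← single_mul_shiftDown x hxz h0]
      exact Ideal.mul_mem_right _ _ (Ideal.subset_span ⟨x.order, hord, rfl⟩)

noncomputable instance : Field (Nov k ⧸ NovMax k) := by
  have : (NovMax k).IsMaximal := by
    rw [novMax_eq_ker]
    exact RingHom.ker_isMaximal_of_surjective (eps k)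
      (fun c => ⟨HahnSeries.single 0 c, HahnSeries.coeff_single_same 0 c⟩)
  exact Ideal.Quotient.field _

lemma isUnit_of_coeff_zero_ne (x : Nov k) (h : x.coeff 0 ≠ 0) : IsUnit x := by
  set c := x.coeff 0 with hc
  set y : Nov k := 1 - (HahnSeries.single 0 c⁻¹) * x with hy
  have hy0 : y.coeff 0 = 0 := by
    simp [hy, coeff_zero_mul, HahnSeries.coeff_single_same, ← hc, inv_mul_cancel₀ h]
  have hyo : 0 < y.orderTop := by
    by_cases hyz : y = 0
    · rw [hyz, HahnSeries.orderTop_zero]; exact WithTop.top_pos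
    · rw [HahnSeries.orderTop_of_ne_zero hyz, ← HahnSeries.order_of_ne hyz, WithTop.coe_pos]
      rcases eq_or_ne y.order 0 with h' | h'
      · exact absurd (h' ▸ hy0) (HahnSeries.coeff_order_eq_zero.not.mpr hyz)
      · exact pos_iff_ne_zero.mpr h'
  have hunit : IsUnit (1 - y) :=
    IsUnit.of_mul_eq_one _ (HahnSeries.SummableFamily.one_sub_self_mul_hsum_powers hyo)
  have h1y : (1 : Nov k) - y = (HahnSeries.single 0 c⁻¹) * x := by rw [hy]; ring
  rw [h1y] at hunit
  have hcu : IsUnit (HahnSeries.single (0:NNReal) c : Nov k) := by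
    apply IsUnit.of_mul_eq_one (HahnSeries.single 0 c⁻¹)
    rw [HahnSeries.single_mul_single, add_zero, mul_inv_cancel₀ h, HahnSeries.single_zero_one]
  have hx' : x = HahnSeries.single 0 c * (HahnSeries.single 0 c⁻¹ * x) := by
    rw [← mul_assoc, HahnSeries.single_mul_single, add_zero, mul_inv_cancel₀ h,
      HahnSeries.single_zero_one, one_mul]
  exact hx' ▸ (hcu.mul hunit)

lemma isUnit_of_mk_eq_one (a : Nov k) (h : Ideal.Quotient.mk (NovMax k) a = 1) : IsUnit a := by
  have hm : a - 1 ∈ NovMax k := Ideal.Quotient.eq.mp (h.trans (map_one _).symm)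
  rw [novMax_eq_ker] at hm
  have h2 : a.coeff 0 - (1 : Nov k).coeff 0 = 0 := by
    have : (a - 1 : Nov k).coeff 0 = 0 := hm
    simpa [HahnSeries.coeff_sub] using this
  have h0 : a.coeff 0 = 1 := by
    have := sub_eq_zero.mp h2
    simpa using this
  exact isUnit_of_coeff_zero_ne a (by rw [h0]; exact one_ne_zero)

end NovikovRing

section Plumbing
universe u

variable {R K : Type} [CommRing R] [Field K] (q : R →+* K)

open scoped ChangeOfRings in
lemma unitMap_surjective (hq : Function.Surjective q) (M : ModuleCat.{u} R) :
    Function.Surjective (ModuleCat.ExtendRestrictScalarsAdj.Unit.map q (X := M)) := by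
  intro z
  induction z using TensorProduct.induction_on with
  | zero => exact ⟨0, map_zero _⟩
  | tmul c m =>
      obtain ⟨r, rfl⟩ := hq c
      refine ⟨r • m, ?_⟩
      have h1 : (ModuleCat.ExtendRestrictScalarsAdj.Unit.map q (X := M)) (r • m) =
          r • (ModuleCat.ExtendRestrictScalarsAdj.Unit.map q (X := M)) m := map_smul _ r m
      rw [h1, ModuleCat.restrictScalars.smul_def]
      have h2 := ModuleCat.ExtendScalars.smul_tmul q (q r) (1 : K) m
      rw [mul_one] at h2
      exact h2
  | add x y hx hy =>
      obtain ⟨m, hm⟩ := hx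
      obtain ⟨n, hn⟩ := hy
      exact ⟨m + n, by rw [map_add, hm, hn]; rfl⟩

lemma exists_map_eq (hq : Function.Surjective q) (M N : ModuleCat.{u} R)
    [Module.Free R M] [Module.Finite R M]
    (σ' : (ModuleCat.extendScalars q).obj M ⟶ (ModuleCat.extendScalars q).obj N) :
    ∃ σ : M ⟶ N, (ModuleCat.extendScalars q).map σ = σ' := by
  let b := Module.Free.chooseBasis R M
  choose n hn using fun j => unitMap_surjective q hq N
    (σ' (ModuleCat.ExtendRestrictScalarsAdj.Unit.map q (b j)))
  let σ : M →ₗ[R] N := b.constr (S := ℕ) n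
  have hnat : (ModuleCat.ExtendRestrictScalarsAdj.Unit.map q (X := M)) ≫
      (ModuleCat.restrictScalars q).map (σ') =
      (ModuleCat.ofHom σ : M ⟶ N) ≫ ModuleCat.ExtendRestrictScalarsAdj.Unit.map q (X := N) := by
    apply ModuleCat.hom_ext
    apply b.ext
    intro j
    show σ' (ModuleCat.ExtendRestrictScalarsAdj.Unit.map q (b j)) =
      ModuleCat.ExtendRestrictScalarsAdj.Unit.map q (σ (b j))
    have : σ (b j) = n j := b.constr_basis (S := ℕ) n j
    rw [this, hn]
  refine ⟨ModuleCat.ofHom σ, ?_⟩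
  apply ModuleCat.hom_ext
  apply LinearMap.ext
  intro z
  obtain ⟨m, rfl⟩ := unitMap_surjective q hq M z
  have := LinearMap.congr_fun (congrArg ModuleCat.Hom.hom hnat) m
  exact (this.symm : _)

section Nakayama
variable {R K : Type} [CommRing R] [Field K] (q : R →+* K)

open scoped ChangeOfRings

/-- coordinate map into restricted K -/
noncomputable def coordHom {M : ModuleCat.{u} R} {ι : Type u} [Fintype ι] [DecidableEq ι]
    (b : Module.Basis ι R M) (i : ι) :
    M ⟶ (ModuleCat.restrictScalars q).obj (ModuleCat.of K (ULift.{u} K)) :=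
    ModuleCat.ofHom (Y := (ModuleCat.restrictScalars q).obj (ModuleCat.of K (ULift.{u} K))) {
  toFun m := ULift.up (q (b.repr m i))
  map_add' m m' := by
    have : (q (b.repr (m + m') i) : K) = q (b.repr m i) + q (b.repr m' i) := by
      rw [map_add, Finsupp.add_apply, map_add]
    exact congrArg ULift.up this
  map_smul' r m := by
    show (ULift.up (q (b.repr (r • m) i)) : ULift K) = ULift.up (q r * q (b.repr m i))
    have : (q (b.repr (r • m) i) : K) = q r * q (b.repr m i) := by
      rw [map_smul, Finsupp.smul_apply, smul_eq_mul, map_mul]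
    exact congrArg ULift.up this }

/-- the coordinate functional on the extended module -/
noncomputable def coordBar {M : ModuleCat.{u} R} {ι : Type u} [Fintype ι] [DecidableEq ι]
    (b : Module.Basis ι R M) (i : ι) :
    (ModuleCat.extendScalars q).obj M ⟶ ModuleCat.of K (ULift.{u} K) :=
  (ModuleCat.extendScalars q).map (coordHom q b i) ≫
    ModuleCat.ExtendRestrictScalarsAdj.Counit.map q

lemma coordBar_tmul {M : ModuleCat.{u} R} {ι : Type u} [Fintype ι] [DecidableEq ι]
    (b : Module.Basis ι R M) (i : ι) (c : K) (m : M) :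
    coordBar q b i (c ⊗ₜ[R,q] m) = ULift.up (c * q (b.repr m i)) := by
  show ModuleCat.ExtendRestrictScalarsAdj.Counit.map q
    ((ModuleCat.extendScalars q).map (coordHom q b i) (c ⊗ₜ[R,q] m)) = ULift.up (c * q (b.repr m i))
  rw [ModuleCat.ExtendScalars.map_tmul]
  erw [ModuleCat.ExtendRestrictScalarsAdj.Counit.map_hom_apply]
  rfl

lemma exists_inverse (hunit : ∀ a : R, q a = 1 → IsUnit a)
    (M : ModuleCat.{u} R) [Module.Free R M] [Module.Finite R M]
    (u : M ⟶ M) (hu : (ModuleCat.extendScalars q).map u = 𝟙 _) :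
    ∃ v : M ⟶ M, (∀ x, v (u x) = x) ∧ (∀ x, u (v x) = x) := by
  classical
  let b := Module.Free.chooseBasis R M
  set A := LinearMap.toMatrix b b u.hom with hA
  have hmap : A.map q = 1 := by
    ext i j
    have h1 : (ModuleCat.extendScalars q).map u ((1 : K) ⊗ₜ[R,q] (b j)) =
        (1 : K) ⊗ₜ[R,q] (b j) := by rw [hu]; rfl
    have h2 : (ModuleCat.extendScalars q).map u ((1 : K) ⊗ₜ[R,q] (b j)) =
        (1 : K) ⊗ₜ[R,q] (u (b j)) := rfl
    have h3 := congrArg (fun z : ↑((ModuleCat.extendScalars q).obj M) => coordBar q b i z) (h2.symm.trans h1)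
    simp only [] at h3
    erw [coordBar_tmul, coordBar_tmul, one_mul, one_mul] at h3
    have h3' : q (b.repr (u (b j)) i) = q (b.repr (b j) i) := congrArg ULift.down h3
    have h4 : A i j = b.repr (u (b j)) i := LinearMap.toMatrix_apply b b u.hom i j
    rw [Matrix.map_apply, h4, h3', Module.Basis.repr_self_apply]
    by_cases hij : j = i
    · subst hij; simp [Matrix.one_apply]
    · simp [Matrix.one_apply, hij, Ne.symm hij]
  have hdet : IsUnit A.det := by
    apply hunit
    rw [RingHom.map_det q A, RingHom.mapMatrix_apply, hmap, Matrix.det_one]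
  let e : M ≃ₗ[R] M := LinearEquiv.ofIsUnitDet (f := u.hom) (v := b) (v' := b) hdet
  have he : (e : M →ₗ[R] M) = u.hom := LinearEquiv.coe_ofIsUnitDet hdet
  refine ⟨ModuleCat.ofHom e.symm.toLinearMap, fun x => ?_, fun x => ?_⟩
  · show e.symm (u.hom x) = x
    rw [← he]; exact e.symm_apply_apply x
  · show u.hom (e.symm x) = x
    conv_lhs => rw [← he]
    exact e.apply_symm_apply x

end Nakayama


section Factor
variable {K : Type} [Field K]

lemma exists_factor {A B P : ModuleCat.{u} K} (d : A ⟶ B) (p : A ⟶ P)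
    (h : ∀ a, d a = 0 → p a = 0) : ∃ s : B ⟶ P, ∀ a, s (d a) = p a := by
  have hker : LinearMap.ker d.hom ≤ LinearMap.ker p.hom := by
    intro a ha
    exact LinearMap.mem_ker.mpr (h a (LinearMap.mem_ker.mp ha))
  let p' := (LinearMap.ker d.hom).liftQ p.hom hker
  let e := LinearMap.quotKerEquivRange d.hom
  obtain ⟨c, hc⟩ := Submodule.exists_isCompl (LinearMap.range d.hom)
  let proj := Submodule.linearProjOfIsCompl _ c hc
  refine ⟨ModuleCat.ofHom (p'.comp (e.symm.toLinearMap.comp proj)), fun a => ?_⟩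
  show p' (e.symm (proj (d a))) = p a
  have h1 : proj (d a) = ⟨d a, LinearMap.mem_range_self _ a⟩ :=
    Submodule.linearProjOfIsCompl_apply_left hc ⟨d a, LinearMap.mem_range_self _ a⟩
  rw [h1]
  have h2 : e.symm ⟨d a, LinearMap.mem_range_self _ a⟩ =
      Submodule.Quotient.mk a := by
    rw [LinearEquiv.symm_apply_eq]
    exact Subtype.ext (LinearMap.quotKerEquivRange_apply_mk d.hom a).symm
  rw [h2]
  exact Submodule.liftQ_apply (LinearMap.ker d.hom) p.hom a

end Factor

section Key

variable {R K : Type} [CommRing R] [Field K] (q : R →+* K)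
  (hq : Function.Surjective q) (hunit : ∀ a : R, q a = 1 → IsUnit a)

lemma key (hq : Function.Surjective q) (hunit : ∀ a : R, q a = 1 → IsUnit a)
    (C : HomologicalComplex (ModuleCat.{u} R) (ComplexShape.down ℤ))
    (hfree : ∀ i, Module.Free R (C.X i)) (hfin : ∀ i, Module.Finite R (C.X i))
    (N : ℤ) (hN : ∀ i : ℤ, N < i → IsZero (C.X i))
    (hacyclic : ∀ i : ℤ,
      (((ModuleCat.extendScalars q).mapHomologicalComplex (ComplexShape.down ℤ)).obj C).ExactAt i) :
    ∀ n : ℕ, ∃ τ : ∀ i j : ℤ, (C.X i ⟶ C.X j),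
    ∀ i : ℤ, N - n < i →
      𝟙 (C.X i) = C.d i (i-1) ≫ τ (i-1) i + τ i (i+1) ≫ C.d (i+1) i := by
  intro n
  induction n with
  | zero =>
      refine ⟨fun _ _ => 0, fun i hi => ?_⟩
      exact (hN i (by omega)).eq_of_src _ _
  | succ n ih =>
      obtain ⟨τ, hτ⟩ := ih
      set i₀ : ℤ := N - n with hi₀
      -- the relation at i₀ + 1
      have hR1 := hτ (i₀ + 1) (by omega)
      have e1 : i₀ + 1 - 1 = i₀ := by omega
      rw [e1] at hR1
      set d1 : C.X i₀ ⟶ C.X (i₀ - 1) := C.d i₀ (i₀ - 1) with hd1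
      set d2 : C.X (i₀ + 1) ⟶ C.X i₀ := C.d (i₀ + 1) i₀ with hd2
      set t1 : C.X i₀ ⟶ C.X (i₀ + 1) := τ i₀ (i₀ + 1) with ht1
      set π : C.X i₀ ⟶ C.X i₀ := 𝟙 (C.X i₀) - t1 ≫ d2 with hπdef
      have h21 : d2 ≫ t1 = 𝟙 (C.X (i₀+1)) - τ (i₀+1) (i₀+1+1) ≫ C.d (i₀+1+1) (i₀+1) := by
        rw [hR1]; abel
      have hπ : d2 ≫ π = 0 := by
        have hstep : d2 ≫ π = d2 - (d2 ≫ t1) ≫ d2 := by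
          rw [hπdef, Preadditive.comp_sub, Category.comp_id, Category.assoc]
        rw [hstep, h21, Preadditive.sub_comp, Category.id_comp, Category.assoc,
          HomologicalComplex.d_comp_d, comp_zero, sub_zero, sub_self]
      -- the reduced complex
      set F := ModuleCat.extendScalars q with hF
      set Fc := (F.mapHomologicalComplex (ComplexShape.down ℤ)).obj C with hFc
      have hex := hacyclic i₀
      rw [HomologicalComplex.exactAt_iff' _ (i₀+1) i₀ (i₀-1)
        (ComplexShape.prev_eq' _ (by simp)) (ComplexShape.next_eq' _ (by simp))] at hex
      rw [ShortComplex.moduleCat_exact_iff] at hex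
      -- factor F.map π through F.map d1
      have hfac : ∀ a : (F.obj (C.X i₀)), (F.map d1) a = 0 → (F.map π) a = 0 := by
        intro a ha
        obtain ⟨y, hy⟩ := hex a ha
        have : F.map π ((F.map d2) y) = (F.map d2 ≫ F.map π) y := rfl
        rw [← hy]
        show F.map π ((F.map d2) y) = 0
        rw [this, ← Functor.map_comp, hπ, Functor.map_zero]
        rfl
      obtain ⟨s, hs⟩ := exists_factor (F.map d1) (F.map π) hfac
      obtain ⟨σ, hσ⟩ := exists_map_eq q hq (C.X (i₀-1)) (C.X i₀) s
      set u : C.X i₀ ⟶ C.X i₀ := t1 ≫ d2 + d1 ≫ σ with hu_def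
      have hu : F.map u = 𝟙 (F.obj (C.X i₀)) := by
        rw [hu_def, F.map_add, Functor.map_comp, Functor.map_comp, hσ]
        have h1 : F.map d1 ≫ s = F.map π := by
          apply ModuleCat.hom_ext; apply LinearMap.ext; intro a; exact hs a
        rw [h1]
        have h2 : F.map π = 𝟙 (F.obj (C.X i₀)) - F.map t1 ≫ F.map d2 := by
          rw [hπdef, Functor.map_sub, Functor.map_comp, CategoryTheory.Functor.map_id]
        rw [h2]
        abel
      obtain ⟨v, hv1, hv2⟩ := exists_inverse q hunit (C.X i₀) u hu
      have huv : u ≫ v = 𝟙 (C.X i₀) := by apply ModuleCat.hom_ext; apply LinearMap.ext; intro x; exact hv1 x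
      have hdu : d2 ≫ u = d2 := by
        rw [hu_def, Preadditive.comp_add, ← Category.assoc, ← Category.assoc, h21,
          Preadditive.sub_comp, Category.id_comp, Category.assoc, HomologicalComplex.d_comp_d,
          comp_zero, sub_zero]
        rw [HomologicalComplex.d_comp_d, zero_comp, add_zero]
      have hdv : d2 ≫ v = d2 := by
        apply ModuleCat.hom_ext; apply LinearMap.ext; intro y
        have h3 : u (d2 y) = d2 y := congrArg (fun (f : C.X (i₀+1) ⟶ C.X i₀) => f y) hdu
        show v (d2 y) = d2 y
        calc v (d2 y) = v (u (d2 y)) := by rw [h3]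
        _ = d2 y := hv1 _
      set τnew : C.X (i₀ - 1) ⟶ C.X i₀ := σ ≫ v with hτnew
      have hRnew : 𝟙 (C.X i₀) = d1 ≫ τnew + t1 ≫ d2 := by
        have h4 : d1 ≫ σ = u - t1 ≫ d2 := by rw [hu_def]; abel
        rw [hτnew, ← Category.assoc, h4, Preadditive.sub_comp, huv, Category.assoc, hdv]
        abel
      refine ⟨fun i j => if h : i = i₀ - 1 ∧ j = i₀ then
        (eqToHom (by rw [h.1]) ≫ τnew ≫ eqToHom (by rw [h.2])) else τ i j, fun i hi => ?_⟩
      beta_reduce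
      by_cases hii : i = i₀
      · subst hii
        rw [dif_pos ⟨rfl, rfl⟩, dif_neg (show ¬(i₀ = i₀ - 1 ∧ i₀ + 1 = i₀) by omega)]
        simp only [eqToHom_refl, Category.comp_id, Category.id_comp]
        exact hRnew
      · have hi' : i₀ < i := by omega
        rw [dif_neg (show ¬(i - 1 = i₀ - 1 ∧ i = i₀) from fun hc => hii hc.2),
          dif_neg (show ¬(i = i₀ - 1 ∧ i + 1 = i₀) by omega)]
        exact hτ i (by omega)


lemma mainExact (hq : Function.Surjective q) (hunit : ∀ a : R, q a = 1 → IsUnit a)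
    (C : HomologicalComplex (ModuleCat.{u} R) (ComplexShape.down ℤ))
    (hfree : ∀ i, Module.Free R (C.X i)) (hfin : ∀ i, Module.Finite R (C.X i))
    (N : ℤ) (hN : ∀ i : ℤ, N < i → IsZero (C.X i))
    (hacyclic : ∀ i : ℤ,
      (((ModuleCat.extendScalars q).mapHomologicalComplex (ComplexShape.down ℤ)).obj C).ExactAt i) :
    ∀ i : ℤ, C.ExactAt i := by
  intro i
  obtain ⟨τ, hτ⟩ := key q hq hunit C hfree hfin N hN hacyclic (N - i + 1).toNat
  have hR := hτ i (by omega)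
  rw [HomologicalComplex.exactAt_iff' C (i+1) i (i-1)
    (ComplexShape.prev_eq' _ (by simp)) (ComplexShape.next_eq' _ (by simp))]
  rw [ShortComplex.moduleCat_exact_iff]
  intro x hx
  refine ⟨τ i (i+1) x, ?_⟩
  have h0 : C.d i (i-1) x = 0 := hx
  have hxx : x = τ (i-1) i (C.d i (i-1) x) + C.d (i+1) i (τ i (i+1) x) :=
    congrArg (fun f : C.X i ⟶ C.X i => f x) hR
  rw [h0, map_zero, zero_add] at hxx
  exact hxx.symm

end Key
end Plumbing

/-- If (C,d) is a bounded chain complex of finite-rank free modules over the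
Novikov ring R whose base change C ⊗_R k to the residue field is acyclic, then
C itself is acyclic. -/
theorem stmt_2 (k : Type) [Field k]
    (C : HomologicalComplex (ModuleCat (Nov k)) (ComplexShape.down ℤ))
    (hfree : ∀ i, Module.Free (Nov k) (C.X i))
    (hfin : ∀ i, Module.Finite (Nov k) (C.X i))
    (hbdd : ∃ N : ℤ, ∀ i : ℤ, N < |i| → IsZero (C.X i))
    (hacyclic : ∀ i : ℤ,
      (((ModuleCat.extendScalars
          (Ideal.Quotient.mk (NovMax k))).mapHomologicalComplex
            (ComplexShape.down ℤ)).obj C).ExactAt i) :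
    ∀ i : ℤ, C.ExactAt i := by
  obtain ⟨N, hbddN⟩ := hbdd
  exact mainExact (Ideal.Quotient.mk (NovMax k)) Ideal.Quotient.mk_surjective
    (fun a ha => isUnit_of_mk_eq_one a ha) C hfree hfin (max N 0)
    (fun i hi => hbddN i (by have : |i| = i := abs_of_pos (by omega); omega)) hacyclic
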